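/- Visser's ADN theorem: let δ be a partial computable function that is fixed point free on its domain (whenever δ(n) is defined, W_{δ(n)} ≠ W_n). Then for every partial computable function ψ there exists a total computable function f such that for every n: if ψ(n) is defined then W_{f(n)} = W_{ψ(n)}, and if ψ(n) is undefined then δ(f(n)) is undefined. -/

import Mathlib

open Nat.Partrec (Code)

/-- The `e`-th partial computable function, via the standard numbering of codes. -/
def phi (e : ℕ) : ℕ →. ℕ := (Denumerable.ofNat Code e).eval

/-- `W e` is the domain of the `e`-th partial computable function. -/
def W (e : ℕ) : Set ℕ := {n | (phi e n).Dom}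

/-- The halting set ∅'. -/
def K0 : Set ℕ := {e | (phi e e).Dom}

/-- Characteristic function of a set of naturals. -/
noncomputable def chi (A : Set ℕ) : ℕ → ℕ := A.indicator 1

/-- Partial recursiveness relative to an oracle `O : ℕ → ℕ`. -/
inductive RecursiveInO (O : ℕ → ℕ) : (ℕ →. ℕ) → Prop
  | zero : RecursiveInO O (pure 0)
  | succ : RecursiveInO O Nat.succ
  | left : RecursiveInO O fun n => (Nat.unpair n).1
  | right : RecursiveInO O fun n => (Nat.unpair n).2
  | oracle : RecursiveInO O fun n => Part.some (O n)
  | pair {f g} : RecursiveInO O f → RecursiveInO O g →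
      RecursiveInO O fun n => Nat.pair <$> f n <*> g n
  | comp {f g} : RecursiveInO O f → RecursiveInO O g →
      RecursiveInO O fun n => g n >>= f
  | prec {f g} : RecursiveInO O f → RecursiveInO O g →
      RecursiveInO O (Nat.unpaired fun a n =>
        n.rec (f a) fun y IH => do
          let i ← IH
          g (Nat.pair a (Nat.pair y i)))
  | rfind {f} : RecursiveInO O f →
      RecursiveInO O fun a =>
        Nat.rfind fun n => (fun m => m = 0) <$> f (Nat.pair a n)

/-- A total function `f` is Turing reducible to the set `A`. -/
def FuncRecIn (A : Set ℕ) (f : ℕ → ℕ) : Prop :=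
  RecursiveInO (chi A) fun n => Part.some (f n)

/-- A binary total function `h` is Turing reducible to the set `A`. -/
def Func2RecIn (A : Set ℕ) (h : ℕ → ℕ → ℕ) : Prop :=
  RecursiveInO (chi A) fun n => Part.some (h (Nat.unpair n).1 (Nat.unpair n).2)

/-- Turing reducibility between sets of naturals. -/
def SetRecIn (A B : Set ℕ) : Prop := RecursiveInO (chi B) fun n => Part.some (chi A n)

/-- `A` is computably enumerable. -/
def CE (A : Set ℕ) : Prop := REPred (· ∈ A)

/-- Codes for oracle machines. -/
inductive OCode : Type
  | zero | succ | left | right | oracle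
  | pair (cf cg : OCode)
  | comp (cf cg : OCode)
  | prec (cf cg : OCode)
  | rfind' (cf : OCode)

/-- Evaluation of oracle codes relative to an oracle `O`. -/
def OCode.evalo (O : ℕ → ℕ) : OCode → ℕ →. ℕ
  | .zero => pure 0
  | .succ => Nat.succ
  | .left => fun n => Part.some (Nat.unpair n).1
  | .right => fun n => Part.some (Nat.unpair n).2
  | .oracle => fun n => Part.some (O n)
  | .pair cf cg => fun n => Nat.pair <$> evalo O cf n <*> evalo O cg n
  | .comp cf cg => fun n => evalo O cg n >>= evalo O cf
  | .prec cf cg => Nat.unpaired fun a n =>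
      n.rec (evalo O cf a) fun y IH => do
        let i ← IH
        evalo O cg (Nat.pair a (Nat.pair y i))
  | .rfind' cf => Nat.unpaired fun a m =>
      (Nat.rfind fun n => (fun x => x = 0) <$> evalo O cf (Nat.pair a (n + m))).map (· + m)

/-- A standard numbering of oracle codes. -/
def OCode.ofNat : ℕ → OCode
  | 0 => .zero
  | 1 => .succ
  | 2 => .left
  | 3 => .right
  | 4 => .oracle
  | n + 5 =>
    let m := n.div2.div2
    have hm : m < n + 5 := by
      simp only [m, Nat.div2_val]
      exact lt_of_le_of_lt (le_trans (Nat.div_le_self _ _) (Nat.div_le_self _ _))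
        (by omega)
    have _m1 : m.unpair.1 < n + 5 := lt_of_le_of_lt m.unpair_left_le hm
    have _m2 : m.unpair.2 < n + 5 := lt_of_le_of_lt m.unpair_right_le hm
    match n.bodd, n.div2.bodd with
    | false, false => .pair (ofNat m.unpair.1) (ofNat m.unpair.2)
    | false, true  => .comp (ofNat m.unpair.1) (ofNat m.unpair.2)
    | true , false => .prec (ofNat m.unpair.1) (ofNat m.unpair.2)
    | true , true  => .rfind' (ofNat m)
decreasing_by
  all_goals first | exact _m1 | exact _m2 | exact hm

/-- The Turing jump of an oracle `O : ℕ → ℕ`. -/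
def jump (O : ℕ → ℕ) : Set ℕ := {e | (OCode.evalo O (OCode.ofNat e) e).Dom}

/-- A binary partial function `δ` is FPF⁺. -/
def FPFplus (δ : ℕ → ℕ →. ℕ) : Prop :=
  ∀ g : ℕ → ℕ, Computable g → ∃ n, ∀ a ∈ δ n (g n), phi (g n) ≠ phi a

section ADNaux

open Nat.Partrec.Code Encodable

/-- The racing functional used in the proof of the ADN theorem. -/
def adnF (cψ cδ : Code) (c : Code) (m : ℕ) : Part ℕ :=
  (Nat.rfind fun s => Part.some ((evaln s cψ m.unpair.1).isSome
      || (evaln s cδ (encode (curry c m.unpair.1))).isSome)) >>= fun s =>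
    (eval (bif (evaln s cψ m.unpair.1).isSome then cψ else cδ)
          (bif (evaln s cψ m.unpair.1).isSome then m.unpair.1
           else encode (curry c m.unpair.1))).bind
      fun a => phi a m.unpair.2

theorem phi_partrec : Partrec₂ phi := by
  have : Partrec fun p : ℕ × ℕ => eval (Denumerable.ofNat Code p.1) p.2 :=
    eval_part.comp ((Computable.ofNat Code).comp Computable.fst) Computable.snd
  exact this

theorem adnF_partrec (cψ cδ : Code) : Partrec₂ (adnF cψ cδ) := by
  have hn : Primrec fun p : Code × ℕ => p.2.unpair.1 :=
    (Primrec.fst.comp (Primrec.unpair.comp Primrec.snd))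
  have hx : Primrec fun p : Code × ℕ => p.2.unpair.2 :=
    (Primrec.snd.comp (Primrec.unpair.comp Primrec.snd))
  have he : Primrec fun p : Code × ℕ => encode (curry p.1 p.2.unpair.1) :=
    Primrec.encode.comp (primrec₂_curry.comp Primrec.fst hn)
  have hb1 : Primrec fun q : (Code × ℕ) × ℕ => (evaln q.2 cψ q.1.2.unpair.1).isSome :=
    Primrec.option_isSome.comp <| primrec_evaln.comp <|
      ((Primrec.snd.pair (Primrec.const cψ)).pair (hn.comp Primrec.fst))
  have hb2 : Primrec fun q : (Code × ℕ) × ℕ =>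
      (evaln q.2 cδ (encode (curry q.1.1 q.1.2.unpair.1))).isSome :=
    Primrec.option_isSome.comp <| primrec_evaln.comp <|
      ((Primrec.snd.pair (Primrec.const cδ)).pair (he.comp Primrec.fst))
  have hb : Primrec fun q : (Code × ℕ) × ℕ =>
      ((evaln q.2 cψ q.1.2.unpair.1).isSome
        || (evaln q.2 cδ (encode (curry q.1.1 q.1.2.unpair.1))).isSome) :=
    Primrec.or.comp hb1 hb2
  have hrfind : Partrec fun p : Code × ℕ => Nat.rfind fun s =>
      Part.some ((evaln s cψ p.2.unpair.1).isSome
        || (evaln s cδ (encode (curry p.1 p.2.unpair.1))).isSome) :=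
    Partrec.rfind hb.to_comp.partrec.to₂
  have hC : Computable fun q : (Code × ℕ) × ℕ =>
      (bif (evaln q.2 cψ q.1.2.unpair.1).isSome then cψ else cδ) :=
    Computable.cond hb1.to_comp (Computable.const cψ) (Computable.const cδ)
  have hA : Computable fun q : (Code × ℕ) × ℕ =>
      (bif (evaln q.2 cψ q.1.2.unpair.1).isSome then q.1.2.unpair.1
       else encode (curry q.1.1 q.1.2.unpair.1)) :=
    Computable.cond hb1.to_comp (hn.comp Primrec.fst).to_comp (he.comp Primrec.fst).to_comp
  have heval : Partrec fun q : (Code × ℕ) × ℕ =>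
      eval (bif (evaln q.2 cψ q.1.2.unpair.1).isSome then cψ else cδ)
           (bif (evaln q.2 cψ q.1.2.unpair.1).isSome then q.1.2.unpair.1
            else encode (curry q.1.1 q.1.2.unpair.1)) :=
    eval_part.comp hC hA
  have hinner : Partrec fun q : (Code × ℕ) × ℕ =>
      (eval (bif (evaln q.2 cψ q.1.2.unpair.1).isSome then cψ else cδ)
           (bif (evaln q.2 cψ q.1.2.unpair.1).isSome then q.1.2.unpair.1
            else encode (curry q.1.1 q.1.2.unpair.1))).bind
        fun a => phi a q.1.2.unpair.2 :=
    heval.bind (phi_partrec.comp Computable.snd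
      ((hx.comp Primrec.fst).to_comp.comp Computable.fst)).to₂
  exact hrfind.bind hinner.to₂

end ADNaux

open Nat.Partrec.Code Encodable in
/-- Visser's ADN theorem. -/
theorem adn (δ : ℕ →. ℕ) (hδ : Nat.Partrec δ)
    (hfpf : ∀ n, ∀ a ∈ δ n, W a ≠ W n)
    (ψ : ℕ →. ℕ) (hψ : Nat.Partrec ψ) :
    ∃ f : ℕ → ℕ, Computable f ∧
      (∀ n, ∀ a ∈ ψ n, W (f n) = W a) ∧
      (∀ n, ¬ (ψ n).Dom → ¬ (δ (f n)).Dom) := by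
  classical
  obtain ⟨cψ, hcψ⟩ := Nat.Partrec.Code.exists_code.1 hψ
  obtain ⟨cδ, hcδ⟩ := Nat.Partrec.Code.exists_code.1 hδ
  obtain ⟨c, hc⟩ := Nat.Partrec.Code.fixed_point₂ (adnF_partrec cψ cδ)
  set f : ℕ → ℕ := fun n => encode (curry c n) with hf
  have hfc : Computable f :=
    (Primrec.encode.comp (primrec₂_curry.comp (Primrec.const c) Primrec.id)).to_comp
  have hphi : ∀ n x, phi (f n) x = adnF cψ cδ c (Nat.pair n x) := by
    intro n x
    have h1 : phi (f n) x = eval (curry c n) x := by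
      simp [phi, hf, Denumerable.ofNat_encode]
    rw [h1, eval_curry, hc]
  -- key computation of phi (f n) once the race has a winner
  have hkey : ∀ n s, s ∈ (Nat.rfind fun s => Part.some ((evaln s cψ n).isSome
      || (evaln s cδ (f n)).isSome)) → ∀ x, phi (f n) x =
        (eval (bif (evaln s cψ n).isSome then cψ else cδ)
              (bif (evaln s cψ n).isSome then n else f n)).bind fun a => phi a x := by
    intro n s hs x
    rw [hphi]
    have hrfeq : (Nat.rfind fun s => Part.some ((evaln s cψ n).isSome
        || (evaln s cδ (f n)).isSome)) = Part.some s := Part.eq_some_iff.2 hs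
    simp only [adnF, Nat.unpair_pair]
    rw [show encode (curry c n) = f n from rfl, hrfeq]
    simp
  -- the δ branch can never win the race, by FPF-ness of δ
  have hwin : ∀ n s, s ∈ (Nat.rfind fun s => Part.some ((evaln s cψ n).isSome
      || (evaln s cδ (f n)).isSome)) → (evaln s cψ n).isSome = true := by
    intro n s hs
    by_contra hb
    rw [Bool.not_eq_true] at hb
    have hsP := Nat.rfind_spec hs
    rw [Part.mem_some_iff] at hsP; rw [hb, Bool.false_or] at hsP; replace hsP := hsP.symm
    obtain ⟨b, hbmem⟩ := Option.isSome_iff_exists.1 hsP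
    have hbev : b ∈ eval cδ (f n) := evaln_sound hbmem
    rw [hcδ] at hbev
    have hδeq : δ (f n) = Part.some b := Part.eq_some_iff.2 hbev
    have heq : ∀ x, phi (f n) x = phi b x := by
      intro x
      rw [hkey n s hs x, hb]
      simp [hcδ, hδeq]
    have : W (f n) = W b := by ext x; simp [W, heq x]
    exact hfpf (f n) b hbev this.symm
  refine ⟨f, hfc, ?_, ?_⟩
  · intro n a ha
    have haev : a ∈ eval cψ n := by rw [hcψ]; exact ha
    obtain ⟨k, hk⟩ := evaln_complete.1 haev
    have hdom : (Nat.rfind fun s => Part.some ((evaln s cψ n).isSome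
        || (evaln s cδ (f n)).isSome)).Dom :=
      Nat.rfind_dom.2 ⟨k, by simp [Option.isSome_iff_exists.2 ⟨a, hk⟩], by intro m _; trivial⟩
    obtain ⟨s, hs⟩ := Part.dom_iff_mem.1 hdom
    have hbs := hwin n s hs
    have hψeq : eval cψ n = Part.some a := Part.eq_some_iff.2 haev
    have heq : ∀ x, phi (f n) x = phi a x := by
      intro x
      rw [hkey n s hs x, hbs]
      simp [hψeq]
    ext x; simp [W, heq x]
  · intro n hnψ hdδ
    obtain ⟨b, hbmem⟩ := Part.dom_iff_mem.1 hdδ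
    have hbev : b ∈ eval cδ (f n) := by rw [hcδ]; exact hbmem
    obtain ⟨k, hk⟩ := evaln_complete.1 hbev
    have hdom : (Nat.rfind fun s => Part.some ((evaln s cψ n).isSome
        || (evaln s cδ (f n)).isSome)).Dom :=
      Nat.rfind_dom.2 ⟨k, by simp [Option.isSome_iff_exists.2 ⟨b, hk⟩], by intro m _; trivial⟩
    obtain ⟨s, hs⟩ := Part.dom_iff_mem.1 hdom
    have hbs := hwin n s hs
    obtain ⟨a, hamem⟩ := Option.isSome_iff_exists.1 hbs
    have : a ∈ eval cψ n := evaln_sound hamem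
    rw [hcψ] at this
    exact hnψ (Part.dom_iff_mem.2 ⟨a, this⟩)
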